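/- Let M be a left divisibility monoid with hypercube alphabet H. For any a, b in M with b = az for some hypercube z, and any t > 0, the length-t prefixes of the right normal forms of a and b satisfy d^H(a^[t], b^[t]) < 2, where d^H is the right directed distance. -/

import Mathlib

section Defs
variable {M : Type*} [Monoid M]

/-- `a` left-divides `b` (`b` is a right multiple of `a`). -/
def LDvd (a b : M) : Prop := ∃ d, b = a * d

/-- `a` right-divides `b` (`b` is a left multiple of `a`). -/
def RDvd (a b : M) : Prop := ∃ d, b = d * a

/-- `a` is an irreducible element of the monoid. -/
def IsIrred (a : M) : Prop := a ≠ 1 ∧ ∀ b c, a = b * c → b = 1 ∨ c = 1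

/-- `c` is a right lcm of `a` and `b`. -/
def IsRightLcm (a b c : M) : Prop :=
  LDvd a c ∧ LDvd b c ∧ ∀ m, LDvd a m → LDvd b m → LDvd c m

/-- `c` is a right lcm of the set `s`. -/
def IsRightLcmSet (s : Set M) (c : M) : Prop :=
  (∀ x ∈ s, LDvd x c) ∧ ∀ m, (∀ x ∈ s, LDvd x m) → LDvd c m

/-- A hypercube: a right lcm of a finite set of irreducible elements. -/
def IsHypercube (h : M) : Prop :=
  ∃ s : Finset M, (∀ x ∈ s, IsIrred x) ∧ IsRightLcmSet (↑s) h

/-- `h` is the maximal hypercube right-dividing `a`. -/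
def IsMaxHC (a h : M) : Prop :=
  IsHypercube h ∧ RDvd h a ∧ ∀ k, IsHypercube k → RDvd k a → RDvd k h

/-- The list `L = [h_p, …, h_1]` of nontrivial hypercubes is a right normal form:
`h_i` is the maximal hypercube right-dividing `h_p ⋯ h_i`. -/
def IsRNF (hmap : M → M) (L : List M) : Prop :=
  (∀ x ∈ L, IsHypercube x ∧ x ≠ 1) ∧
  ∀ n (hn : n < L.length), hmap ((L.take (n + 1)).prod) = L.get ⟨n, hn⟩

end Defs

/-- A left divisibility monoid: cancellative, generated by its finitely many
irreducibles, any two elements have a left gcd, and every set of left divisors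
is a finite distributive lattice under left divisibility. -/
def IsLDM (M : Type*) [Monoid M] : Prop :=
  (∀ a b c : M, a * b = a * c → b = c) ∧
  (∀ a b c : M, b * a = c * a → b = c) ∧
  (∃ S : Finset M, (∀ x ∈ S, IsIrred x) ∧ Submonoid.closure (S : Set M) = ⊤) ∧
  (∀ a b : M, ∃ g, LDvd g a ∧ LDvd g b ∧ ∀ c, LDvd c a → LDvd c b → LDvd c g) ∧
  (∀ a : M, {b : M | LDvd b a}.Finite) ∧
  (∀ a : M, ∃ i : DistribLattice {b : M // LDvd b a},
      ∀ x y : {b : M // LDvd b a}, i.le x y ↔ LDvd x.1 y.1)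

section Aux
set_option linter.unusedSectionVars false
variable {M : Type*} [Monoid M]

lemma ldvd_refl (a : M) : LDvd a a := ⟨1, (mul_one a).symm⟩
lemma ldvd_trans {a b c : M} (h1 : LDvd a b) (h2 : LDvd b c) : LDvd a c := by
  obtain ⟨d, rfl⟩ := h1; obtain ⟨e, rfl⟩ := h2; exact ⟨d * e, mul_assoc _ _ _⟩
lemma one_ldvd (a : M) : LDvd 1 a := ⟨a, (one_mul a).symm⟩
lemma rdvd_refl (a : M) : RDvd a a := ⟨1, (one_mul a).symm⟩
lemma one_rdvd (a : M) : RDvd 1 a := ⟨a, (mul_one a).symm⟩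
lemma rdvd_trans {a b c : M} (h1 : RDvd a b) (h2 : RDvd b c) : RDvd a c := by
  obtain ⟨d, rfl⟩ := h1; obtain ⟨e, rfl⟩ := h2; exact ⟨e * d, (mul_assoc _ _ _).symm⟩

variable (hM : IsLDM M)
include hM

lemma lcan {a b c : M} (h : a * b = a * c) : b = c := hM.1 a b c h
lemma rcan {a b c : M} (h : b * a = c * a) : b = c := hM.2.1 a b c h

lemma unit_eq_one {u v : M} (h : u * v = 1) : u = 1 ∧ v = 1 := by
  obtain ⟨i, hi⟩ := hM.2.2.2.2.2 (1 : M)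
  letI := i
  have hu1 : LDvd u 1 := ⟨v, h.symm⟩
  have h1 : LDvd (1:M) (1:M) := ldvd_refl 1
  have e1 : (⟨u, hu1⟩ : {b : M // LDvd b 1}) = ⟨1, h1⟩ := by
    apply le_antisymm
    · exact (hi _ _).mpr ⟨v, h.symm⟩
    · exact (hi _ _).mpr (one_ldvd u)
  have hu : u = 1 := congrArg Subtype.val e1
  subst hu; rw [one_mul] at h; exact ⟨rfl, h⟩

lemma ldvd_antisymm {a b : M} (h1 : LDvd a b) (h2 : LDvd b a) : a = b := by
  obtain ⟨d, rfl⟩ := h1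
  obtain ⟨e, he⟩ := h2
  have : a * (d * e) = a * 1 := by rw [mul_one, ← mul_assoc]; exact he.symm
  have := lcan hM this
  rw [(unit_eq_one hM this).1, mul_one]

lemma rdvd_antisymm {a b : M} (h1 : RDvd a b) (h2 : RDvd b a) : a = b := by
  obtain ⟨d, rfl⟩ := h1
  obtain ⟨e, he⟩ := h2
  have : (e * d) * a = 1 * a := by rw [one_mul, mul_assoc]; exact he.symm
  have := rcan hM this
  rw [(unit_eq_one hM this).2, one_mul]

lemma ldvd_one_iff {a : M} : LDvd a 1 ↔ a = 1 := by
  constructor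
  · rintro ⟨d, hd⟩; exact (unit_eq_one hM hd.symm).1
  · rintro rfl; exact ldvd_refl 1

lemma rdvd_one_iff {a : M} : RDvd a 1 ↔ a = 1 := by
  constructor
  · rintro ⟨d, hd⟩; exact (unit_eq_one hM hd.symm).2
  · rintro rfl; exact rdvd_refl 1

noncomputable def lgcd (a b : M) : M := (hM.2.2.2.1 a b).choose

lemma lgcd_dvd_left (a b : M) : LDvd (lgcd hM a b) a := (hM.2.2.2.1 a b).choose_spec.1
lemma lgcd_dvd_right (a b : M) : LDvd (lgcd hM a b) b := (hM.2.2.2.1 a b).choose_spec.2.1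
lemma dvd_lgcd {a b c : M} (h1 : LDvd c a) (h2 : LDvd c b) : LDvd c (lgcd hM a b) :=
  (hM.2.2.2.1 a b).choose_spec.2.2 c h1 h2

lemma mul_lgcd (a u v : M) : a * lgcd hM u v = lgcd hM (a * u) (a * v) := by
  apply ldvd_antisymm hM
  · apply dvd_lgcd hM
    · obtain ⟨d, hd⟩ := lgcd_dvd_left hM u v
      refine ⟨d, ?_⟩
      conv_lhs => rw [hd]
      rw [mul_assoc]
    · obtain ⟨d, hd⟩ := lgcd_dvd_right hM u v
      refine ⟨d, ?_⟩
      conv_lhs => rw [hd]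
      rw [mul_assoc]
  · have ha : LDvd a (lgcd hM (a*u) (a*v)) := by
      apply dvd_lgcd hM ⟨u, rfl⟩ ⟨v, rfl⟩
    obtain ⟨g, hg⟩ := ha
    have hgu : LDvd g u := by
      obtain ⟨d, hd⟩ := lgcd_dvd_left hM (a*u) (a*v)
      rw [hg] at hd
      exact ⟨d, lcan hM (by rw [← mul_assoc]; exact hd)⟩
    have hgv : LDvd g v := by
      obtain ⟨d, hd⟩ := lgcd_dvd_right hM (a*u) (a*v)
      rw [hg] at hd
      exact ⟨d, lcan hM (by rw [← mul_assoc]; exact hd)⟩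
    obtain ⟨d, hd⟩ := dvd_lgcd hM hgu hgv
    exact ⟨d, by rw [hg, hd, mul_assoc]⟩

lemma exists_irred_factorization (x : M) :
    ∃ l : List M, (∀ i ∈ l, IsIrred i) ∧ l.prod = x := by
  obtain ⟨S, hSirr, hScl⟩ := hM.2.2.1
  have hx : x ∈ Submonoid.closure (S : Set M) := by rw [hScl]; trivial
  induction hx using Submonoid.closure_induction with
  | mem y hy => exact ⟨[y], by simpa using hSirr y hy, by simp⟩
  | one => exact ⟨[], by simp, by simp⟩
  | mul y z _ _ hy hz =>
      obtain ⟨l1, h1, p1⟩ := hy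
      obtain ⟨l2, h2, p2⟩ := hz
      exact ⟨l1 ++ l2, by intro i hi; rcases List.mem_append.mp hi with h | h
                          exacts [h1 i h, h2 i h], by rw [List.prod_append, p1, p2]⟩

lemma exists_irred_rdvd {x : M} (hx : x ≠ 1) : ∃ i, IsIrred i ∧ RDvd i x := by
  obtain ⟨l, hl, hp⟩ := exists_irred_factorization hM x
  have hne : l ≠ [] := by rintro rfl; simp at hp; exact hx hp.symm
  have := List.dropLast_append_getLast hne
  refine ⟨l.getLast hne, hl _ (List.getLast_mem hne), ⟨l.dropLast.prod, ?_⟩⟩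
  rw [← hp]
  conv_lhs => rw [← this]
  rw [List.prod_append, List.prod_cons, List.prod_nil, mul_one]

lemma dvd_irred {u i : M} (hi : IsIrred i) (h : LDvd u i) : u = 1 ∨ u = i := by
  obtain ⟨d, hd⟩ := h
  rcases hi.2 u d hd with h1 | h1
  · exact Or.inl h1
  · right; rw [hd, h1, mul_one]

lemma hypercube_one : IsHypercube (1 : M) :=
  ⟨∅, by simp, by simp [IsRightLcmSet], by intro m _; exact one_ldvd m⟩

lemma irred_hypercube {j : M} (hj : IsIrred j) : IsHypercube j := by
  refine ⟨{j}, ?_, ?_, ?_⟩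
  · intro x hx
    have hxj : x = j := by simpa using hx
    rw [hxj]; exact hj
  · intro x hx
    have hxj : x = j := by simpa using hx
    rw [hxj]; exact ldvd_refl j
  · intro m hm; exact hm j (by simp)

def IsGLub {M : Type*} [Monoid M] (l : List M) (j : M) : Prop :=
  (∀ v ∈ l, LDvd v j) ∧ ∀ w, (∀ v ∈ l, LDvd v w) → LDvd j w

lemma exists_lub {u v y : M} (hu : LDvd u y) (hv : LDvd v y) :
    ∃ j, LDvd u j ∧ LDvd v j ∧ LDvd j y ∧ ∀ w, LDvd u w → LDvd v w → LDvd j w := by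
  obtain ⟨i, hi⟩ := hM.2.2.2.2.2 y
  letI := i
  set U : {b : M // LDvd b y} := ⟨u, hu⟩
  set V : {b : M // LDvd b y} := ⟨v, hv⟩
  refine ⟨(U ⊔ V).1, (hi U (U ⊔ V)).mp le_sup_left, (hi V (U ⊔ V)).mp le_sup_right,
    (U ⊔ V).2, ?_⟩
  intro w hw1 hw2
  have h1 : LDvd u (lgcd hM y w) := dvd_lgcd hM hu hw1
  have h2 : LDvd v (lgcd hM y w) := dvd_lgcd hM hv hw2
  set G : {b : M // LDvd b y} := ⟨lgcd hM y w, lgcd_dvd_left hM y w⟩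
  have hle : U ⊔ V ≤ G := sup_le ((hi U G).mpr h1) ((hi V G).mpr h2)
  exact ldvd_trans ((hi _ _).mp hle) (lgcd_dvd_right hM y w)

lemma exists_list_lub (l : List M) {y : M} (h : ∀ v ∈ l, LDvd v y) :
    ∃ j, IsGLub l j ∧ LDvd j y := by
  induction l with
  | nil => exact ⟨1, ⟨by simp, fun w _ => one_ldvd w⟩, one_ldvd y⟩
  | cons v l ih =>
      obtain ⟨j2, hj2, hj2y⟩ := ih (fun x hx => h x (List.mem_cons_of_mem v hx))
      obtain ⟨j, hvj, hj2j, hjy, hleast⟩ := exists_lub hM (h v (List.mem_cons_self)) hj2y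
      refine ⟨j, ⟨?_, ?_⟩, hjy⟩
      · intro x hx
        rcases List.mem_cons.mp hx with rfl | hx
        · exact hvj
        · exact ldvd_trans (hj2.1 x hx) hj2j
      · intro w hw
        exact hleast w (hw v (List.mem_cons_self))
          (hj2.2 w (fun x hx => hw x (List.mem_cons_of_mem v hx)))

lemma dvd_of_dvd_lub_coprime {u v w j y : M} (hu : LDvd u y) (hv : LDvd v y)
    (hw : LDvd w y) (hjv : LDvd v j) (hjw : LDvd w j) (hjy : LDvd j y)
    (hleast : ∀ m, LDvd v m → LDvd w m → LDvd j m) (huj : LDvd u j)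
    (hcop : ∀ c, LDvd c u → LDvd c w → c = 1) : LDvd u v := by
  obtain ⟨i, hi⟩ := hM.2.2.2.2.2 y
  letI := i
  set U : {b : M // LDvd b y} := ⟨u, hu⟩
  set V : {b : M // LDvd b y} := ⟨v, hv⟩
  set W : {b : M // LDvd b y} := ⟨w, hw⟩
  set J : {b : M // LDvd b y} := ⟨j, hjy⟩
  have hJ : J = V ⊔ W := by
    apply le_antisymm
    · exact (hi _ _).mpr (hleast (V ⊔ W).1 ((hi V _).mp le_sup_left) ((hi W _).mp le_sup_right))
    · exact sup_le ((hi _ _).mpr hjv) ((hi _ _).mpr hjw)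
  have hU : U ≤ V ⊔ W := hJ ▸ (hi U J).mpr huj
  have hkey : U = (U ⊓ V) ⊔ (U ⊓ W) := by
    rw [← inf_sup_left]; exact (inf_eq_left.mpr hU).symm
  have h1 : (U ⊓ W).1 = 1 := hcop _ ((hi _ U).mp inf_le_left) ((hi _ W).mp inf_le_right)
  have h2 : U ≤ V := by
    rw [hkey]
    apply sup_le inf_le_right
    exact (hi _ V).mpr (by rw [h1]; exact one_ldvd v)
  exact (hi U V).mp h2

lemma coprime_list_lub : ∀ (l : List M) {u j y : M}, LDvd u y → (∀ v ∈ l, LDvd v y) →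
    (∀ v ∈ l, ∀ c, LDvd c u → LDvd c v → c = 1) → IsGLub l j →
    ∀ c, LDvd c u → LDvd c j → c = 1 := by
  intro l
  induction l with
  | nil =>
      intro u j y _ _ _ hj c _ hcj
      have : LDvd j 1 := hj.2 1 (by simp)
      exact (ldvd_one_iff hM).mp (ldvd_trans hcj this)
  | cons v l ih =>
      intro u j y huy hly hcop hj c hcu hcj
      obtain ⟨j2, hj2, hj2y⟩ :=
        exists_list_lub hM l (fun x hx => hly x (List.mem_cons_of_mem v hx))
      have hjy : LDvd j y := hj.2 y hly
      obtain ⟨i, hi⟩ := hM.2.2.2.2.2 y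
      letI := i
      set V : {b : M // LDvd b y} := ⟨v, hly v (List.mem_cons_self)⟩
      set J2 : {b : M // LDvd b y} := ⟨j2, hj2y⟩
      set J : {b : M // LDvd b y} := ⟨j, hjy⟩
      have hJ : J = V ⊔ J2 := by
        apply le_antisymm
        · apply (hi _ _).mpr
          apply hj.2
          intro x hx
          rcases List.mem_cons.mp hx with rfl | hx
          · exact (hi V _).mp le_sup_left
          · exact ldvd_trans (hj2.1 x hx) ((hi J2 _).mp le_sup_right)
        · apply sup_le
          · exact (hi _ _).mpr (hj.1 v (List.mem_cons_self))
          · exact (hi _ _).mpr (hj2.2 j (fun x hx => hj.1 x (List.mem_cons_of_mem v hx)))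
      have hcy : LDvd c y := ldvd_trans hcj hjy
      set C : {b : M // LDvd b y} := ⟨c, hcy⟩
      have hCJ : C ≤ V ⊔ J2 := hJ ▸ (hi C J).mpr hcj
      have hkey : C = (C ⊓ V) ⊔ (C ⊓ J2) := by
        rw [← inf_sup_left]; exact (inf_eq_left.mpr hCJ).symm
      have h1 : (C ⊓ V).1 = 1 := by
        apply hcop v (List.mem_cons_self)
        · exact ldvd_trans ((hi _ C).mp inf_le_left) hcu
        · exact (hi _ V).mp inf_le_right
      have h2 : (C ⊓ J2).1 = 1 := by
        refine ih (u := u) huy (fun x hx => hly x (List.mem_cons_of_mem v hx))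
          (fun x hx => hcop x (List.mem_cons_of_mem v hx)) hj2 _ ?_ ?_
        · exact ldvd_trans ((hi _ C).mp inf_le_left) hcu
        · exact (hi _ J2).mp inf_le_right
      have hC1 : C ≤ ⟨1, one_ldvd y⟩ := by
        rw [hkey]
        apply sup_le
        · exact (hi _ _).mpr (by rw [h1]; exact ldvd_refl 1)
        · exact (hi _ _).mpr (by rw [h2]; exact ldvd_refl 1)
      exact (ldvd_one_iff hM).mp ((hi _ _).mp hC1)

lemma hypercube_of_ldvd {h u : M} (hh : IsHypercube h) (hu : LDvd u h) : IsHypercube u := by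
  classical
  obtain ⟨s, hsi, hsl⟩ := hh
  have main : ∀ n (s : Finset M), s.card ≤ n → (∀ x ∈ s, IsIrred x) →
      ∀ h u : M, IsRightLcmSet (s : Set M) h → LDvd u h → IsHypercube u := by
    intro n
    induction n with
    | zero =>
        intro s hcard hirr h u hlcm hu
        have hs : s = ∅ := Finset.card_eq_zero.mp (le_antisymm hcard (Nat.zero_le _))
        subst hs
        have h1 : LDvd h 1 := hlcm.2 1 (by simp)
        have hu1 : u = 1 := (ldvd_one_iff hM).mp (ldvd_trans hu h1)
        rw [hu1]; exact hypercube_one hM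
    | succ n ih =>
        intro s hcard hirr h u hlcm hu
        by_cases hall : ∀ x ∈ s, LDvd x u
        · have h_dvd_u : LDvd h u := hlcm.2 u (fun x hx => hall x (Finset.mem_coe.mp hx))
          have : u = h := ldvd_antisymm hM hu h_dvd_u
          rw [this]; exact ⟨s, hirr, hlcm⟩
        · push_neg at hall
          obtain ⟨i0, hi0s, hi0nd⟩ := hall
          have hmem : ∀ v ∈ (s.erase i0).toList, LDvd v h := by
            intro v hv
            exact hlcm.1 v (Finset.mem_coe.mpr (Finset.mem_of_mem_erase (Finset.mem_toList.mp hv)))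
          obtain ⟨e, he_glub, heh⟩ := exists_list_lub hM _ hmem
          have hi0h : LDvd i0 h := hlcm.1 i0 (Finset.mem_coe.mpr hi0s)
          have hleast : ∀ m, LDvd e m → LDvd i0 m → LDvd h m := by
            intro m h1 h2
            apply hlcm.2
            intro x hx
            by_cases hxi : x = i0
            · rw [hxi]; exact h2
            · exact ldvd_trans (he_glub.1 x (Finset.mem_toList.mpr
                (Finset.mem_erase.mpr ⟨hxi, Finset.mem_coe.mp hx⟩))) h1
          have hcop : ∀ c, LDvd c u → LDvd c i0 → c = 1 := by
            intro c hcu hci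
            rcases dvd_irred hM (hirr i0 hi0s) hci with h1 | h1
            · exact h1
            · exact absurd (h1 ▸ hcu) hi0nd
          have hue : LDvd u e :=
            dvd_of_dvd_lub_coprime hM hu heh hi0h heh hi0h (ldvd_refl h) hleast hu hcop
          refine ih (s.erase i0) ?_ (fun x hx => hirr x (Finset.mem_of_mem_erase hx)) e u ?_ hue
          · rw [Finset.card_erase_of_mem hi0s]
            omega
          · constructor
            · intro x hx
              exact he_glub.1 x (Finset.mem_toList.mpr (Finset.mem_coe.mp hx))
            · intro m hm
              exact he_glub.2 m (fun x hx => hm x (Finset.mem_coe.mpr (Finset.mem_toList.mp hx)))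
  exact main s.card s le_rfl hsi h u hsl hu

section Hmap
variable (hmap : M → M) (hspec : ∀ a : M, IsMaxHC a (hmap a))
include hspec

lemma hmap_of_hypercube {h : M} (hh : IsHypercube h) : hmap h = h :=
  rdvd_antisymm hM (hspec h).2.1 ((hspec h).2.2 h hh (rdvd_refl h))

lemma hmap_one : hmap 1 = 1 := (rdvd_one_iff hM).mp (hspec 1).2.1

lemma hmap_ne_one {x : M} (hx : x ≠ 1) : hmap x ≠ 1 := by
  obtain ⟨i0, hi0, hrd⟩ := exists_irred_rdvd hM hx
  have h1 : RDvd i0 (hmap x) := (hspec x).2.2 i0 (irred_hypercube hM hi0) hrd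
  intro hcon
  rw [hcon] at h1
  exact hi0.1 ((rdvd_one_iff hM).mp h1)

lemma irred_rdvd_hmul {x c j : M} (hj : IsIrred j) (hrd : RDvd j (x * c)) :
    RDvd j (hmap x * c) := by
  obtain ⟨e, he⟩ := hrd
  by_cases hxe : LDvd x e
  · obtain ⟨e', he'⟩ := hxe
    have hc : c = e' * j := by
      apply lcan hM (a := x)
      rw [← mul_assoc, ← he']; exact he
    exact ⟨hmap x * e', by rw [hc, ← mul_assoc]⟩
  · obtain ⟨i, hi⟩ := hM.2.2.2.2.2 (x * c)
    letI := i
    have hxy : LDvd x (x * c) := ⟨c, rfl⟩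
    have hey : LDvd e (x * c) := ⟨j, he⟩
    set X : {b : M // LDvd b (x * c)} := ⟨x, hxy⟩ with hXdef
    set E : {b : M // LDvd b (x * c)} := ⟨e, hey⟩ with hEdef
    have hcoatom : ∀ v : M, LDvd e v → LDvd v (x * c) → v = e ∨ v = x * c := by
      rintro v ⟨b, hb⟩ ⟨c'', hc''⟩
      have hjb : j = b * c'' := by
        apply lcan hM (a := e)
        rw [← he, hc'', hb, mul_assoc]
      rcases hj.2 _ _ hjb with hb1 | hc1
      · left; rw [hb, hb1, mul_one]
      · right; rw [hc''] at *; rw [hc1, mul_one]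
    set g := lgcd hM x e with hgdef
    obtain ⟨i1, hgx⟩ := lgcd_dvd_left hM x e
    have hi1 : IsIrred i1 := by
      constructor
      · rintro rfl
        rw [mul_one] at hgx
        exact hxe (hgx ▸ lgcd_dvd_right hM x e)
      · intro b c' hbc'
        have hfx : LDvd (g * b) x := ⟨c', by rw [hgx, hbc', mul_assoc]⟩
        have hfy : LDvd (g * b) (x * c) := ldvd_trans hfx hxy
        set F : {b' : M // LDvd b' (x * c)} := ⟨g * b, hfy⟩ with hFdef
        have hFX : F ≤ X := (hi _ _).mpr hfx
        have hEX : (E ⊓ X).1 = g := by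
          apply ldvd_antisymm hM
          · exact dvd_lgcd hM ((hi _ X).mp inf_le_right) ((hi _ E).mp inf_le_left)
          · have hgy : LDvd g (x * c) := ldvd_trans (lgcd_dvd_left hM x e) hxy
            have hle : (⟨g, hgy⟩ : {b' : M // LDvd b' (x * c)}) ≤ E ⊓ X :=
              le_inf ((hi _ _).mpr (lgcd_dvd_right hM x e)) ((hi _ _).mpr (lgcd_dvd_left hM x e))
            exact (hi _ _).mp hle
        have hkey : (F ⊔ E) ⊓ X = F := by
          rw [inf_sup_right, inf_eq_left.mpr hFX]
          apply sup_eq_left.mpr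
          apply (hi _ _).mpr
          rw [hEX]
          exact ⟨b, rfl⟩
        rcases hcoatom (F ⊔ E).1 ((hi E _).mp le_sup_right) (F ⊔ E).2 with h1 | h1
        · left
          have hFE : F ⊔ E = E := Subtype.ext h1
          have hFval : F = E ⊓ X := by rw [← hkey, hFE]
          have hval : g * b = g := by
            have := congrArg Subtype.val hFval
            rw [hEX] at this
            exact this
          exact lcan hM (by rw [mul_one]; exact hval)
        · right
          have hXle : X ≤ F ⊔ E := (hi _ _).mpr (by rw [h1]; exact hxy)
          have hFX2 : F = X := by rw [← hkey, inf_eq_right.mpr hXle]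
          have hval : g * b = g * i1 := by
            have h2 := congrArg Subtype.val hFX2
            exact h2.trans hgx
          have hbi : b = i1 := lcan hM hval
          apply lcan hM (a := i1)
          rw [mul_one]
          rw [hbi] at hbc'
          exact hbc'.symm
    have hrdi : RDvd i1 x := ⟨g, hgx⟩
    obtain ⟨h1', hh1⟩ := (hspec x).2.2 i1 (irred_hypercube hM hi1) hrdi
    obtain ⟨x0, hx0⟩ := (hspec x).2.1
    have hg : g = x0 * h1' := by
      apply rcan hM (a := i1)
      rw [← hgx, mul_assoc, ← hh1, ← hx0]
    obtain ⟨f, hf⟩ := lgcd_dvd_right hM x e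
    have hic : i1 * c = f * j := by
      apply lcan hM (a := g)
      rw [← mul_assoc, ← hgx, ← mul_assoc, ← hf]
      exact he
    exact ⟨h1' * f, by rw [hh1, mul_assoc, hic, ← mul_assoc]⟩

lemma exists_compl_of_irred_cond {y k w m x' : M} (hk : IsHypercube k)
    (hyk : y = m * k) (hyw : y = x' * w)
    (H : ∀ j, IsIrred j → RDvd j y → RDvd j w) : ∃ c', w = c' * k := by
  classical
  by_cases hk1 : k = 1
  · exact ⟨w, by rw [hk1, mul_one]⟩
  obtain ⟨s, hsirr, hslcm⟩ := hk
  have hEx : ∀ i : M, ∃ e, IsGLub ((s.erase i).toList) e ∧ LDvd e k := by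
    intro i
    apply exists_list_lub hM
    intro v hv
    exact hslcm.1 v (Finset.mem_coe.mpr (Finset.mem_of_mem_erase (Finset.mem_toList.mp hv)))
  choose eF heF hek using hEx
  have hnd : ∀ i ∈ s, ¬ LDvd i (eF i) := by
    intro i his hcon
    have hco : ∀ v ∈ (s.erase i).toList, ∀ c, LDvd c i → LDvd c v → c = 1 := by
      intro v hv c hci hcv
      rcases dvd_irred hM (hsirr i his) hci with h1 | h1
      · exact h1
      · rcases dvd_irred hM (hsirr v (Finset.mem_of_mem_erase (Finset.mem_toList.mp hv)))
          (h1 ▸ hcv) with h2 | h2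
        · exact h1.trans h2
        · exact absurd h2.symm (Finset.mem_erase.mp (Finset.mem_toList.mp hv)).1
    have hmem : ∀ v ∈ (s.erase i).toList, LDvd v k := by
      intro v hv
      exact hslcm.1 v (Finset.mem_coe.mpr (Finset.mem_of_mem_erase (Finset.mem_toList.mp hv)))
    have := coprime_list_lub hM ((s.erase i).toList) (u := i) (y := k)
      (hslcm.1 i (Finset.mem_coe.mpr his)) hmem hco (heF i) i (ldvd_refl i) hcon
    exact (hsirr i his).1 this
  have hcoat : ∀ i ∈ s, ∃ jj, IsIrred jj ∧ k = eF i * jj := by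
    intro i his
    obtain ⟨t, ht⟩ := hek i
    have ht1 : t ≠ 1 := by
      rintro rfl
      rw [mul_one] at ht
      exact hnd i his (ht ▸ hslcm.1 i (Finset.mem_coe.mpr his))
    have hint : ∀ f, LDvd (eF i) f → LDvd f k → f = eF i ∨ f = k := by
      intro f hef hfk
      obtain ⟨li, hli⟩ := hM.2.2.2.2.2 k
      letI := li
      set Fx : {b : M // LDvd b k} := ⟨f, hfk⟩
      set I : {b : M // LDvd b k} := ⟨i, hslcm.1 i (Finset.mem_coe.mpr his)⟩
      set Ee : {b : M // LDvd b k} := ⟨eF i, hek i⟩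
      have htop : I ⊔ Ee = ⟨k, ldvd_refl k⟩ := by
        apply le_antisymm
        · exact (hli _ _).mpr (I ⊔ Ee).2
        · apply (hli _ _).mpr
          apply hslcm.2
          intro x hx
          by_cases hxi : x = i
          · rw [hxi]; exact (hli I _).mp le_sup_left
          · have : LDvd x (eF i) := (heF i).1 x
              (Finset.mem_toList.mpr (Finset.mem_erase.mpr ⟨hxi, Finset.mem_coe.mp hx⟩))
            exact ldvd_trans this ((hli Ee _).mp le_sup_right)
      have hFtop : Fx ≤ I ⊔ Ee := by
        rw [htop]; exact (hli _ _).mpr hfk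
      have hEF : Ee ≤ Fx := (hli _ _).mpr hef
      have hFeq : Fx = (Fx ⊓ I) ⊔ Ee := by
        conv_lhs => rw [← inf_eq_left.mpr hFtop, inf_sup_left]
        rw [inf_eq_right.mpr hEF]
      rcases dvd_irred hM (hsirr i his) ((hli _ I).mp inf_le_right) with hv | hv
      · left
        have h1 : Fx ⊓ I ≤ Ee := (hli _ _).mpr (by rw [hv]; exact one_ldvd _)
        have : Fx ≤ Ee := by rw [hFeq]; exact sup_le h1 le_rfl
        exact congrArg Subtype.val (le_antisymm this hEF)
      · right
        have hIF : I ≤ Fx := by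
          have : Fx ⊓ I = I := Subtype.ext hv
          rw [← this]; exact inf_le_left
        have : I ⊔ Ee ≤ Fx := sup_le hIF hEF
        rw [htop] at this
        exact ((ldvd_antisymm hM ((hli _ _).mp this) hfk)).symm
    refine ⟨t, ⟨ht1, ?_⟩, ht⟩
    intro b c' hbc'
    have hb' : LDvd (eF i) (eF i * b) := ⟨b, rfl⟩
    have hbk : LDvd (eF i * b) k := ⟨c', by rw [ht, hbc', mul_assoc]⟩
    rcases hint _ hb' hbk with h1 | h1
    · left; exact lcan hM (by rw [mul_one]; exact h1)
    · right
      have hbt : b = t := lcan hM (h1.trans ht)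
      apply lcan hM (a := t)
      rw [mul_one]
      rw [hbt] at hbc'
      exact hbc'.symm
  have hstep : ∀ i ∈ s, LDvd x' (m * eF i) := by
    intro i his
    obtain ⟨jj, hjj, hkeq⟩ := hcoat i his
    have hrd : RDvd jj y := ⟨m * eF i, by rw [hyk, hkeq, mul_assoc]⟩
    obtain ⟨w1, hw1⟩ := H jj hjj hrd
    refine ⟨w1, ?_⟩
    apply rcan hM (a := jj)
    have hstep2 : x' * (w1 * jj) = m * (eF i * jj) := by rw [← hw1, ← hyw, hyk, hkeq]
    rw [mul_assoc, mul_assoc]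
    exact hstep2.symm
  have hsne : s.toList ≠ [] := by
    intro hcon
    have hse : s = ∅ := Finset.toList_eq_nil.mp hcon
    have hk1' : LDvd k 1 := hslcm.2 1 (by simp [hse])
    exact hk1 ((ldvd_one_iff hM).mp hk1')
  have hacc : ∀ l : List M, l ≠ [] → (∀ e' ∈ l, LDvd x' (m * e')) →
      ∃ G, LDvd x' (m * G) ∧ ∀ e' ∈ l, LDvd G e' := by
    intro l
    induction l with
    | nil => intro h; exact absurd rfl h
    | cons v l ihl =>
        intro _ hl
        by_cases hln : l = []
        · subst hln
          refine ⟨v, hl v (List.mem_cons_self), ?_⟩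
          intro e' he'
          rcases List.mem_cons.mp he' with rfl | he'
          · exact ldvd_refl e'
          · simp at he'
        · obtain ⟨G, hG1, hG2⟩ := ihl hln (fun e' he' => hl e' (List.mem_cons_of_mem v he'))
          refine ⟨lgcd hM v G, ?_, ?_⟩
          · have hd := dvd_lgcd hM (hl v (List.mem_cons_self)) hG1
            rwa [← mul_lgcd hM] at hd
          · intro e' he'
            rcases List.mem_cons.mp he' with rfl | he'
            · exact lgcd_dvd_left hM e' G
            · exact ldvd_trans (lgcd_dvd_right hM v G) (hG2 e' he')
  have hmapne : (s.toList.map eF) ≠ [] := by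
    intro hcon
    exact hsne (List.map_eq_nil_iff.mp hcon)
  obtain ⟨G, hG1, hG2⟩ := hacc (s.toList.map eF) hmapne (by
    intro e' he'
    obtain ⟨i2, hi2, rfl⟩ := List.mem_map.mp he'
    exact hstep i2 (Finset.mem_toList.mp hi2))
  have hGe : ∀ i ∈ s, LDvd G (eF i) := by
    intro i his
    exact hG2 _ (List.mem_map_of_mem (f := eF) (Finset.mem_toList.mpr his))
  obtain ⟨i0, hi0⟩ := Finset.nonempty_of_ne_empty (fun hse => hsne (Finset.toList_eq_nil.mpr hse))
  have hGk : LDvd G k := ldvd_trans (hGe i0 hi0) (hek i0)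
  have hGco : ∀ v ∈ s.toList, ∀ c, LDvd c G → LDvd c v → c = 1 := by
    intro v hv c hcG hcv
    have hvs : v ∈ s := Finset.mem_toList.mp hv
    rcases dvd_irred hM (hsirr v hvs) hcv with h1 | h1
    · exact h1
    · exact absurd (ldvd_trans (h1 ▸ hcG) (hGe v hvs)) (hnd v hvs)
  have hglub : IsGLub s.toList k := by
    constructor
    · intro v hv; exact hslcm.1 v (Finset.mem_coe.mpr (Finset.mem_toList.mp hv))
    · intro w' hw'
      exact hslcm.2 w' (fun v hv => hw' v (Finset.mem_toList.mpr (Finset.mem_coe.mp hv)))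
  have hG1' : G = 1 :=
    coprime_list_lub hM s.toList (u := G) (y := k) hGk
      (fun v hv => hslcm.1 v (Finset.mem_coe.mpr (Finset.mem_toList.mp hv))) hGco hglub
      G (ldvd_refl G) hGk
  rw [hG1', mul_one] at hG1
  obtain ⟨c', hc'⟩ := hG1
  refine ⟨c', ?_⟩
  apply lcan hM (a := x')
  rw [← hyw, hyk, hc', mul_assoc]

lemma key_lemma {x c : M} (hc : IsHypercube c) :
    ∃ c', IsHypercube c' ∧ hmap x * c = c' * hmap (x * c) := by
  obtain ⟨m, hm⟩ := (hspec (x * c)).2.1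
  obtain ⟨x0, hx0⟩ := (hspec x).2.1
  have hyw : x * c = x0 * (hmap x * c) := by
    conv_lhs => rw [hx0]
    rw [mul_assoc]
  obtain ⟨c', hc'⟩ := exists_compl_of_irred_cond hM hmap hspec (hspec (x * c)).1 hm hyw
    (fun j hj hr => irred_rdvd_hmul hM hmap hspec hj hr)
  obtain ⟨k2, hk2⟩ := (hspec (x * c)).2.2 c hc ⟨x, rfl⟩
  have hhx : hmap x = c' * k2 := by
    apply rcan hM (a := c)
    rw [mul_assoc, ← hk2]
    exact hc'
  exact ⟨c', hypercube_of_ldvd hM (hspec x).1 ⟨k2, hhx⟩, hc'⟩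

omit hspec in
lemma rnf_prod_one {L : List M} (h : IsRNF hmap L) (hp : L.prod = 1) : L = [] := by
  cases L with
  | nil => rfl
  | cons a l =>
      rw [List.prod_cons] at hp
      exact absurd (unit_eq_one hM hp).1 (h.1 a (List.mem_cons_self)).2

omit hspec in
lemma rnf_getLast {L : List M} (h : IsRNF hmap L) (hne : L ≠ []) :
    L.getLast hne = hmap L.prod := by
  have hlen : 0 < L.length := List.length_pos_iff.mpr hne
  have hcond := h.2 (L.length - 1) (by omega)
  have htake : L.take (L.length - 1 + 1) = L := by
    apply List.take_of_length_le
    omega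
  rw [htake] at hcond
  rw [List.getLast_eq_getElem]
  exact hcond.symm

omit hspec in
lemma rnf_dropLast {L : List M} (h : IsRNF hmap L) : IsRNF hmap L.dropLast := by
  constructor
  · intro x hx
    exact h.1 x (List.dropLast_subset L hx)
  · intro n hn
    rw [List.length_dropLast] at hn
    have h1 : L.dropLast.take (n + 1) = L.take (n + 1) := by
      rw [List.dropLast_eq_take, List.take_take, min_eq_left (by omega)]
    rw [h1]
    have h2 := h.2 n (by omega)
    rw [h2]
    simp [List.getElem_dropLast]

omit hspec in
lemma rnf_dropLast_prod {L : List M} (hne : L ≠ []) :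
    L.dropLast.prod * L.getLast hne = L.prod := by
  conv_rhs => rw [← List.dropLast_append_getLast hne]
  rw [List.prod_append, List.prod_cons, List.prod_nil, mul_one]

lemma rnf_len : ∀ n : ℕ, ∀ (L L' : List M) (c : M), L.length + L'.length ≤ n →
    IsRNF hmap L → IsRNF hmap L' → IsHypercube c → L.prod * c = L'.prod →
    L.length ≤ L'.length ∧ L'.length ≤ L.length + 1 := by
  intro n
  induction n with
  | zero =>
      intro L L' c hn hL hL' hc hp
      have h1 : L = [] := List.eq_nil_of_length_eq_zero (by omega)
      have h2 : L' = [] := List.eq_nil_of_length_eq_zero (by omega)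
      simp [h1, h2]
  | succ n ih =>
      intro L L' c hn hL hL' hc hp
      by_cases hL'e : L' = []
      · subst hL'e
        simp at hp
        have hLnil : L = [] := rnf_prod_one hM hmap hL (unit_eq_one hM hp).1
        simp [hLnil]
      by_cases hLe : L = []
      · subst hLe
        simp at hp
        -- L'.prod = c, show length L' = 1
        have hc1 : c ≠ 1 := by
          rintro rfl
          exact hL'e (rnf_prod_one hM hmap hL' hp.symm)
        have hgl : L'.getLast hL'e = hmap L'.prod := rnf_getLast hM hmap hL' hL'e
        have hmc : hmap L'.prod = c := by rw [← hp]; exact hmap_of_hypercube hM hmap hspec hc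
        have hdp := rnf_dropLast_prod hM hL'e
        rw [hgl, hmc, ← hp] at hdp
        -- dropLast.prod * c = c = 1 * c
        have hdp1 : L'.dropLast.prod = 1 := by
          apply rcan hM (a := c)
          rw [hdp, one_mul]
        have hdnil : L'.dropLast = [] := rnf_prod_one hM hmap (rnf_dropLast hM hmap hL') hdp1
        have : L'.length - 1 = 0 := by rw [← List.length_dropLast, hdnil]; rfl
        have hpos : 0 < L'.length := List.length_pos_iff.mpr hL'e
        simp
        omega
      · -- both nonempty
        have hgl : L.getLast hLe = hmap L.prod := rnf_getLast hM hmap hL hLe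
        have hgl' : L'.getLast hL'e = hmap L'.prod := rnf_getLast hM hmap hL' hL'e
        obtain ⟨c', hc'hc, hc'⟩ := key_lemma hM hmap hspec (x := L.prod) hc
        have hdp := rnf_dropLast_prod hM hLe
        have hdp' := rnf_dropLast_prod hM hL'e
        rw [hgl] at hdp
        rw [hgl', ← hp] at hdp'
        -- dropLast L' prod = dropLast L prod * c'
        have hrel : L.dropLast.prod * c' = L'.dropLast.prod := by
          apply rcan hM (a := hmap (L.prod * c))
          rw [hdp', mul_assoc, ← hc', ← mul_assoc, hdp]
        have hlen : 0 < L.length := List.length_pos_iff.mpr hLe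
        have hlen' : 0 < L'.length := List.length_pos_iff.mpr hL'e
        have hbound : L.dropLast.length + L'.dropLast.length ≤ n := by
          rw [List.length_dropLast, List.length_dropLast]; omega
        obtain ⟨ha, hb⟩ := ih L.dropLast L'.dropLast c' hbound (rnf_dropLast hM hmap hL)
          (rnf_dropLast hM hmap hL') hc'hc hrel
        rw [List.length_dropLast, List.length_dropLast] at ha hb
        omega

lemma rnf_nil : IsRNF hmap ([] : List M) := by
  constructor
  · intro x hx; simp at hx
  · intro n hn; simp at hn

lemma ml_nil {L' : List M} (c : M) (hL' : IsRNF hmap L') (hc : IsHypercube c)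
    (hp : L'.prod = c) (t : ℕ) :
    ∃ d, IsHypercube d ∧ (1 * d = (L'.take t).prod ∨ (1 : M) = (L'.take t).prod * d) := by
  cases t with
  | zero => exact ⟨1, hypercube_one hM, Or.inl (by simp)⟩
  | succ t' =>
      have hlen := rnf_len hM hmap hspec (0 + L'.length) [] L' c (by simp)
        (rnf_nil hM hmap hspec) hL' hc (by simp [hp])
      simp at hlen
      have : L'.take (t' + 1) = L' := List.take_of_length_le (by omega)
      rw [this, hp]
      exact ⟨c, hc, Or.inl (one_mul c)⟩

lemma main_lemma : ∀ n : ℕ, ∀ (L L' : List M) (c : M), L.length ≤ n →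
    IsRNF hmap L → IsRNF hmap L' → IsHypercube c → L.prod * c = L'.prod →
    ∀ t : ℕ, ∃ d, IsHypercube d ∧
      ((L.take t).prod * d = (L'.take t).prod ∨ (L.take t).prod = (L'.take t).prod * d) := by
  intro n
  induction n with
  | zero =>
      intro L L' c hn hL hL' hc hp t
      have hLe : L = [] := List.eq_nil_of_length_eq_zero (by omega)
      subst hLe
      simp only [List.prod_nil, one_mul] at hp
      have := ml_nil hM hmap hspec c hL' hc hp.symm t
      simpa using this
  | succ n ih =>
      intro L L' c hn hL hL' hc hp t
      by_cases hall : L.length ≤ t ∧ L'.length ≤ t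
      · rw [List.take_of_length_le hall.1, List.take_of_length_le hall.2]
        exact ⟨c, hc, Or.inl hp⟩
      by_cases hLe : L = []
      · subst hLe
        simp only [List.prod_nil, one_mul] at hp
        have := ml_nil hM hmap hspec c hL' hc hp.symm t
        simpa using this
      have hL'e : L' ≠ [] := by
        rintro rfl
        simp only [List.prod_nil] at hp
        exact hLe (rnf_prod_one hM hmap hL (unit_eq_one hM hp).1)
      obtain ⟨hlen1, hlen2⟩ := rnf_len hM hmap hspec (L.length + L'.length) L L' c le_rfl
        hL hL' hc hp
      have hlenL : 0 < L.length := List.length_pos_iff.mpr hLe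
      have hlenL' : 0 < L'.length := List.length_pos_iff.mpr hL'e
      by_cases ht1 : t < L.length
      · -- recurse on dropLasts
        have ht2 : t < L'.length := lt_of_lt_of_le ht1 hlen1
        have hgl : L.getLast hLe = hmap L.prod := rnf_getLast hM hmap hL hLe
        have hgl' : L'.getLast hL'e = hmap L'.prod := rnf_getLast hM hmap hL' hL'e
        obtain ⟨c', hc'hc, hc'⟩ := key_lemma hM hmap hspec (x := L.prod) hc
        have hdp := rnf_dropLast_prod hM hLe
        have hdp' := rnf_dropLast_prod hM hL'e
        rw [hgl] at hdp
        rw [hgl', ← hp] at hdp'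
        have hrel : L.dropLast.prod * c' = L'.dropLast.prod := by
          apply rcan hM (a := hmap (L.prod * c))
          rw [hdp', mul_assoc, ← hc', ← mul_assoc, hdp]
        obtain ⟨d, hd, hor⟩ := ih L.dropLast L'.dropLast c'
          (by rw [List.length_dropLast]; omega) (rnf_dropLast hM hmap hL)
          (rnf_dropLast hM hmap hL') hc'hc hrel t
        have e1 : L.dropLast.take t = L.take t := by
          rw [List.dropLast_eq_take, List.take_take, min_eq_left (by omega)]
        have e2 : L'.dropLast.take t = L'.take t := by
          rw [List.dropLast_eq_take, List.take_take, min_eq_left (by omega)]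
        rw [e1, e2] at hor
        exact ⟨d, hd, hor⟩
      · -- t ≥ L.length, t < L'.length : boundary case
        have ht2 : t < L'.length := by
          rcases Nat.lt_or_ge t L'.length with h | h
          · exact h
          · exact absurd ⟨by omega, h⟩ hall
        rw [List.take_of_length_le (by omega : L.length ≤ t)]
        have htL' : L'.take t = L'.dropLast := by
          rw [List.dropLast_eq_take]
          congr 1
          omega
        rw [htL']
        obtain ⟨k2, hk2⟩ := (hspec (L.prod * c)).2.2 c hc ⟨L.prod, rfl⟩
        have hdp' := rnf_dropLast_prod hM hL'e
        rw [rnf_getLast hM hmap hL' hL'e, ← hp] at hdp'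
        have hkey : L'.dropLast.prod * k2 * c = L.prod * c := by
          rw [mul_assoc, ← hk2, hdp']
        have hx : L.prod = L'.dropLast.prod * k2 := (rcan hM hkey).symm
        exact ⟨k2, hypercube_of_ldvd hM (hspec (L.prod * c)).1 ⟨c, hk2⟩, Or.inr hx⟩

end Hmap
end Aux

/-- Right directed fellow traveller property with constant 2: prefixes of the
right normal forms of `a` and `a * z` stay at right directed distance < 2. -/
theorem stmt_15 {M : Type*} [Monoid M] (hM : IsLDM M)
    (hmap : M → M) (hspec : ∀ a : M, IsMaxHC a (hmap a))
    {a b z : M} (hz : IsHypercube z) (hb : b = a * z)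
    {La Lb : List M} (hLa : IsRNF hmap La ∧ La.prod = a)
    (hLb : IsRNF hmap Lb ∧ Lb.prod = b) (t : ℕ) (ht : 0 < t) :
    ∃ w : List M, (∀ x ∈ w, IsHypercube x) ∧ w.length < 2 ∧
      ((La.take t).prod * w.prod = (Lb.take t).prod ∨
       (La.take t).prod = (Lb.take t).prod * w.prod) := by
  have hp : La.prod * z = Lb.prod := by rw [hLa.2, hLb.2, hb]
  obtain ⟨d, hd, hor⟩ := main_lemma hM hmap hspec La.length La Lb z le_rfl hLa.1 hLb.1 hz hp t
  refine ⟨[d], ?_, by simp, ?_⟩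
  · intro x hx
    have : x = d := by simpa using hx
    rw [this]; exact hd
  · simpa using hor
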